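/- Let H be a real Hilbert space, L a bounded linear operator on H, and {V_n} an asymptotically-invariant exhausting sequence of subspaces with respect to L. If K is a compact bounded linear operator on H, then {V_n} is also an asymptotically-invariant exhausting sequence with respect to L + K; in particular, ‖(L+K) π_{V_n} − π_{V_n} (L+K)‖ → 0 in operator norm. -/

import Mathlib

open scoped InnerProductSpace

/-- The orthogonal projection of a Hilbert space onto (the closure of) a subspace, viewed as a
continuous linear operator `H →L[ℝ] H`. For a closed (e.g. finite-dimensional) subspace this is
the usual orthogonal projection onto it. -/
noncomputable def orthProj {H : Type*} [NormedAddCommGroup H] [InnerProductSpace ℝ H]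
    [CompleteSpace H] (V : Submodule ℝ H) : H →L[ℝ] H :=
  V.topologicalClosure.subtypeL.comp (V.topologicalClosure.orthogonalProjectionOnto)

/-- A sequence `{V n}` of finite-dimensional subspaces of `H` is an *asymptotically-invariant
exhausting sequence* with respect to a bounded operator `L` if it is increasing, the
commutators `[L, π_{V n}]` tend to `0` in operator norm, and `π_{V n} → 1` pointwise. -/
def IsAsymptInvExhaustingSeq {H : Type*} [NormedAddCommGroup H] [InnerProductSpace ℝ H]
    [CompleteSpace H] (L : H →L[ℝ] H) (V : ℕ → Submodule ℝ H) : Prop :=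
  (∀ n, FiniteDimensional ℝ (V n)) ∧ Monotone V ∧
  Filter.Tendsto (fun n => ‖L * orthProj (V n) - orthProj (V n) * L‖) Filter.atTop (nhds 0) ∧
  (∀ x : H, Filter.Tendsto (fun n => orthProj (V n) x) Filter.atTop (nhds x))

section Aux

variable {H : Type*} [NormedAddCommGroup H] [InnerProductSpace ℝ H] [CompleteSpace H]

/-- Contraction property of `1 - orthProj V`. -/
lemma norm_sub_orthProj_le (V : Submodule ℝ H) (x : H) : ‖x - orthProj V x‖ ≤ ‖x‖ := by
  haveI : CompleteSpace V.topologicalClosure :=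
    V.isClosed_topologicalClosure.completeSpace_coe
  set U := V.topologicalClosure
  have hmem : x - orthProj V x ∈ Uᗮ := by
    exact Submodule.sub_starProjection_mem_orthogonal (K := U) x
  have hmem' : (orthProj V x : H) ∈ U := by
    exact (U.orthogonalProjectionOnto x).2
  have hinner : ⟪(orthProj V x : H), x - orthProj V x⟫_ℝ = 0 :=
    Submodule.inner_right_of_mem_orthogonal hmem' hmem
  have hsq : ‖x‖ ^ 2 = ‖(orthProj V x : H)‖ ^ 2 + ‖x - orthProj V x‖ ^ 2 := by
    have h := norm_add_sq_real (orthProj V x) (x - orthProj V x)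
    rw [hinner, show (orthProj V x : H) + (x - orthProj V x) = x by abel] at h
    rw [h]; ring
  have h2 : ‖x - orthProj V x‖ ^ 2 ≤ ‖x‖ ^ 2 := by nlinarith [sq_nonneg ‖(orthProj V x : H)‖]
  have := Real.sqrt_le_sqrt h2
  rwa [Real.sqrt_sq (norm_nonneg _), Real.sqrt_sq (norm_nonneg _)] at this

lemma norm_one_sub_orthProj_le (V : Submodule ℝ H) : ‖(1 : H →L[ℝ] H) - orthProj V‖ ≤ 1 := by
  refine ContinuousLinearMap.opNorm_le_bound _ zero_le_one fun x => ?_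
  simpa [one_mul] using norm_sub_orthProj_le V x

lemma orthProj_isSelfAdjoint (V : Submodule ℝ H) : IsSelfAdjoint (orthProj V) := by
  haveI : CompleteSpace V.topologicalClosure :=
    V.isClosed_topologicalClosure.completeSpace_coe
  exact isSelfAdjoint_starProjection V.topologicalClosure

/-- Key lemma: if `T` has totally bounded image of the unit ball, and `orthProj (V n) → 1`
pointwise, then `(1 - orthProj (V n)) * T → 0` in norm. -/
lemma key_tendsto (T : H →L[ℝ] H) (hT : TotallyBounded (T '' Metric.closedBall (0 : H) 1))
    (V : ℕ → Submodule ℝ H)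
    (hpt : ∀ x : H, Filter.Tendsto (fun n => orthProj (V n) x) Filter.atTop (nhds x)) :
    Filter.Tendsto (fun n => ‖((1 : H →L[ℝ] H) - orthProj (V n)) * T‖) Filter.atTop (nhds 0) := by
  rw [Metric.tendsto_atTop]
  intro ε hε
  obtain ⟨t, htf, hcover⟩ := Metric.totallyBounded_iff.mp hT (ε / 4) (by linarith)
  -- for each point of the net, find a threshold
  have hthr : ∀ y : H, ∃ N : ℕ, ∀ n ≥ N, ‖y - orthProj (V n) y‖ < ε / 4 := by
    intro y
    have := (hpt y).const_sub y
    rw [sub_self] at this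
    have h := (Metric.tendsto_atTop.mp ((continuous_norm.tendsto _).comp this)) (ε / 4)
      (by linarith)
    obtain ⟨N, hN⟩ := h
    refine ⟨N, fun n hn => ?_⟩
    have := hN n hn
    simpa [Real.dist_eq, abs_of_nonneg (norm_nonneg _)] using this
  choose Nf hNf using hthr
  refine ⟨htf.toFinset.sup Nf, fun n hn => ?_⟩
  have hball : ∀ x ∈ Metric.closedBall (0 : H) 1,
      ‖(((1 : H →L[ℝ] H) - orthProj (V n)) * T) x‖ ≤ ε / 2 := by
    intro x hx
    have hTx : T x ∈ T '' Metric.closedBall (0 : H) 1 := ⟨x, hx, rfl⟩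
    obtain ⟨y, hy, hdy⟩ := by
      have := hcover hTx
      simpa using this
    have hy' : Nf y ≤ n := le_trans (Finset.le_sup (htf.mem_toFinset.mpr hy)) hn
    have h1 : ‖T x - y - orthProj (V n) (T x - y)‖ ≤ ‖T x - y‖ := norm_sub_orthProj_le _ _
    have h2 : ‖y - orthProj (V n) y‖ < ε / 4 := hNf y n hy'
    have hdy' : ‖T x - y‖ < ε / 4 := by
      rw [dist_eq_norm] at hdy; exact hdy
    have hexp : (((1 : H →L[ℝ] H) - orthProj (V n)) * T) x
        = (T x - y - orthProj (V n) (T x - y)) + (y - orthProj (V n) y) := by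
      simp [ContinuousLinearMap.mul_apply, ContinuousLinearMap.sub_apply, map_sub]
      abel
    rw [hexp]
    calc ‖_ + _‖ ≤ ‖T x - y - orthProj (V n) (T x - y)‖ + ‖y - orthProj (V n) y‖ :=
          norm_add_le _ _
      _ ≤ ε / 4 + ε / 4 := by
          exact add_le_add (le_trans h1 hdy'.le) h2.le
      _ = ε / 2 := by ring
  have hnorm : ‖((1 : H →L[ℝ] H) - orthProj (V n)) * T‖ ≤ ε / 2 := by
    refine ContinuousLinearMap.opNorm_le_bound' _ (by linarith) fun x hx => ?_
    set u := ‖x‖⁻¹ • x with hu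
    have hux : ‖u‖ = 1 := by
      rw [hu, norm_smul, norm_inv, norm_norm, inv_mul_cancel₀ hx]
    have hub : u ∈ Metric.closedBall (0 : H) 1 := by
      simp [Metric.mem_closedBall, dist_eq_norm, hux]
    have := hball u hub
    have hfx : (((1 : H →L[ℝ] H) - orthProj (V n)) * T) x
        = ‖x‖ • (((1 : H →L[ℝ] H) - orthProj (V n)) * T) u := by
      rw [hu, map_smul, smul_smul, mul_inv_cancel₀ hx, one_smul]
    rw [hfx, norm_smul, norm_norm, mul_comm]
    exact mul_le_mul_of_nonneg_right this (norm_nonneg _)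
  rw [Real.dist_eq, sub_zero, abs_of_nonneg (norm_nonneg _)]
  linarith

end Aux

/-- An asymptotically-invariant exhausting sequence with respect to `L` is
also asymptotically-invariant exhausting with respect to `L + K` for any compact bounded
linear operator `K`; in particular `‖(L+K) π_{V n} − π_{V n} (L+K)‖ → 0`. -/
theorem isAsymptInvExhaustingSeq_add_compact
    {H : Type*} [NormedAddCommGroup H] [InnerProductSpace ℝ H] [CompleteSpace H]
    (L K : H →L[ℝ] H) (V : ℕ → Submodule ℝ H)
    (hV : IsAsymptInvExhaustingSeq L V)
    (hK : TotallyBounded (K '' Metric.closedBall (0:H) 1)) :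
    IsAsymptInvExhaustingSeq (L + K) V ∧
    Filter.Tendsto (fun n => ‖(L + K) * orthProj (V n) - orthProj (V n) * (L + K)‖)
      Filter.atTop (nhds 0) := by
  obtain ⟨hfd, hmono, hcomm, hpt⟩ := hV
  set Kd := ContinuousLinearMap.adjoint K with hKd
  -- `K† ∘ K` also has totally bounded image of the unit ball
  have hT2 : TotallyBounded ((Kd * K) '' Metric.closedBall (0 : H) 1) := by
    have : (Kd * K) '' Metric.closedBall (0 : H) 1 = Kd '' (K '' Metric.closedBall (0 : H) 1) := by
      rw [← Set.image_comp]; rfl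
    rw [this]
    exact hK.image Kd.uniformContinuous
  have h1 : Filter.Tendsto (fun n => ‖((1 : H →L[ℝ] H) - orthProj (V n)) * K‖)
      Filter.atTop (nhds 0) := key_tendsto K hK V hpt
  have h2 : Filter.Tendsto (fun n => ‖((1 : H →L[ℝ] H) - orthProj (V n)) * (Kd * K)‖)
      Filter.atTop (nhds 0) := key_tendsto (Kd * K) hT2 V hpt
  -- `‖K (1 - P n)‖ ≤ sqrt ‖(1 - P n) K† K‖`
  have hKQ : ∀ n, ‖K * ((1 : H →L[ℝ] H) - orthProj (V n))‖
      ≤ Real.sqrt ‖((1 : H →L[ℝ] H) - orthProj (V n)) * (Kd * K)‖ := by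
    intro n
    set Q := (1 : H →L[ℝ] H) - orthProj (V n) with hQ
    have hQsa : IsSelfAdjoint Q := (IsSelfAdjoint.one (R := H →L[ℝ] H)).sub (orthProj_isSelfAdjoint _)
    have hQn : ‖Q‖ ≤ 1 := norm_one_sub_orthProj_le _
    have hnorm2 : ‖K * Q‖ * ‖K * Q‖ ≤ ‖Q * (Kd * K)‖ := by
      have hA := ContinuousLinearMap.norm_adjoint_comp_self (𝕜 := ℝ) (K * Q)
      have hadj : ContinuousLinearMap.adjoint (K * Q) = Q * Kd := by
        rw [ContinuousLinearMap.mul_def, ContinuousLinearMap.adjoint_comp, hQsa.adjoint_eq]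
        rfl
      rw [hadj] at hA
      have heq : (Q * Kd) ∘L (K * Q) = (Q * (Kd * K)) * Q := by
        ext x; simp [ContinuousLinearMap.mul_apply]
      rw [heq] at hA
      calc ‖K * Q‖ * ‖K * Q‖ = ‖(Q * (Kd * K)) * Q‖ := hA.symm
        _ ≤ ‖Q * (Kd * K)‖ * ‖Q‖ := ContinuousLinearMap.opNorm_comp_le _ _
        _ ≤ ‖Q * (Kd * K)‖ * 1 := by
            exact mul_le_mul_of_nonneg_left hQn (norm_nonneg _)
        _ = ‖Q * (Kd * K)‖ := mul_one _
    have := Real.sqrt_le_sqrt hnorm2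
    rwa [show ‖K * Q‖ * ‖K * Q‖ = ‖K * Q‖ ^ 2 by ring, Real.sqrt_sq (norm_nonneg _)] at this
  -- the commutator with `K` tends to zero
  have hsqrt : Filter.Tendsto
      (fun n => Real.sqrt ‖((1 : H →L[ℝ] H) - orthProj (V n)) * (Kd * K)‖)
      Filter.atTop (nhds 0) := by
    have := h2.sqrt
    rwa [Real.sqrt_zero] at this
  have hsum : Filter.Tendsto
      (fun n => Real.sqrt ‖((1 : H →L[ℝ] H) - orthProj (V n)) * (Kd * K)‖
        + ‖((1 : H →L[ℝ] H) - orthProj (V n)) * K‖) Filter.atTop (nhds 0) := by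
    simpa using hsqrt.add h1
  have hK3 : Filter.Tendsto (fun n => ‖K * orthProj (V n) - orthProj (V n) * K‖)
      Filter.atTop (nhds 0) := by
    refine squeeze_zero (fun n => norm_nonneg _) (fun n => ?_) hsum
    have hrw : K * orthProj (V n) - orthProj (V n) * K
        = (((1 : H →L[ℝ] H) - orthProj (V n)) * K)
          - (K * ((1 : H →L[ℝ] H) - orthProj (V n))) := by noncomm_ring
    rw [hrw]
    calc ‖_ - _‖ ≤ ‖((1 : H →L[ℝ] H) - orthProj (V n)) * K‖
          + ‖K * ((1 : H →L[ℝ] H) - orthProj (V n))‖ := norm_sub_le _ _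
      _ = ‖K * ((1 : H →L[ℝ] H) - orthProj (V n))‖
          + ‖((1 : H →L[ℝ] H) - orthProj (V n)) * K‖ := by ring
      _ ≤ Real.sqrt ‖((1 : H →L[ℝ] H) - orthProj (V n)) * (Kd * K)‖
          + ‖((1 : H →L[ℝ] H) - orthProj (V n)) * K‖ :=
            add_le_add (hKQ n) le_rfl
  have hfinal : Filter.Tendsto
      (fun n => ‖(L + K) * orthProj (V n) - orthProj (V n) * (L + K)‖)
      Filter.atTop (nhds 0) := by
    have := hcomm.add hK3
    rw [add_zero] at this
    refine squeeze_zero (fun n => norm_nonneg _) (fun n => ?_) this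
    have hrw : (L + K) * orthProj (V n) - orthProj (V n) * (L + K)
        = (L * orthProj (V n) - orthProj (V n) * L)
          + (K * orthProj (V n) - orthProj (V n) * K) := by noncomm_ring
    rw [hrw]
    exact norm_add_le _ _
  exact ⟨⟨hfd, hmono, hfinal, hpt⟩, hfinal⟩
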